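/- With single-qubit states ρ_{y b} = U_b|y⟩⟨y|U_b†, where U_+ = I, U_× = H, U_⊙ = K, the matrix Q = 3·(½(1 + 1/√3))·I on C² satisfies Q ≥ ρ_{o₊ +} + ρ_{o_× ×} + ρ_{o_⊙ ⊙} for all o₊, o_×, o_⊙ ∈ {0,1}. -/

import Mathlib

open Matrix
open scoped ComplexOrder

/-- The Hadamard matrix. -/
noncomputable def Had : Matrix (Fin 2) (Fin 2) ℂ :=
  ((Real.sqrt 2 : ℂ))⁻¹ • !![1, 1; 1, -1]

/-- `K = (I + i σₓ)/√2`. -/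
noncomputable def Km : Matrix (Fin 2) (Fin 2) ℂ :=
  ((Real.sqrt 2 : ℂ))⁻¹ • (1 + Complex.I • !![0, 1; 1, 0])

/-- Single-qubit encodings `ρ_{y b} = U_b|y⟩⟨y|U_b†` with `U_+ = I`, `U_× = H`,
`U_⊙ = K` (`b = 0,1,2` respectively). -/
noncomputable def rhoQ (y : Fin 2) (b : Fin 3) : Matrix (Fin 2) (Fin 2) ℂ :=
  if b = 0 then Matrix.single y y 1
  else if b = 1 then Had * Matrix.single y y 1 * Hadᴴ
  else Km * Matrix.single y y 1 * Kmᴴ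

lemma psd2 (a d : ℝ) (b : ℂ) (ha : 0 < a) (hd : Complex.normSq b = a * d) :
    (!![(a:ℂ), b; star b, (d:ℂ)]).PosSemidef := by
  have hs' : ((Real.sqrt a : ℝ) : ℂ) ≠ 0 := by
    exact_mod_cast Real.sqrt_ne_zero'.mpr ha
  have hsq : ((Real.sqrt a : ℝ) : ℂ) * ((Real.sqrt a : ℝ) : ℂ) = (a : ℂ) := by
    rw [← Complex.ofReal_mul, Real.mul_self_sqrt ha.le]
  have key := Matrix.posSemidef_conjTranspose_mul_self
    (!![((Real.sqrt a : ℝ) : ℂ), b / ((Real.sqrt a : ℝ) : ℂ); 0, 0])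
  convert key using 1
  ext i j
  fin_cases i <;> fin_cases j <;>
    simp [Matrix.mul_apply, Fin.sum_univ_two, Matrix.conjTranspose_apply,
      Complex.conj_ofReal, map_div₀]
  · exact hsq.symm
  · rw [mul_div_cancel₀ _ hs']
  · rw [div_mul_cancel₀ _ hs']
  · rw [div_mul_div_comm, mul_comm ((starRingEnd ℂ) b) b, Complex.mul_conj, hsq, hd]
    push_cast
    rw [mul_comm (a:ℂ) (d:ℂ), mul_div_assoc, div_self (by exact_mod_cast ha.ne'), mul_one]

set_option maxHeartbeats 2000000 in
/-- Dual SDP feasibility for PI₀-STAR(XOR), three bases: the operator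
`Q = 3·(½(1 + 1/√3))·I` on `ℂ²` dominates `ρ_{o₊ +} + ρ_{o_× ×} + ρ_{o_⊙ ⊙}`
for all `o₊, o_×, o_⊙ ∈ {0,1}` in the Loewner order. -/
theorem dual_feasible_xor_three_bases :
    ∀ op ot oo : Fin 2,
      (((3 * ((1/2) * (1 + (Real.sqrt 3)⁻¹)) : ℝ) : ℂ) • (1 : Matrix (Fin 2) (Fin 2) ℂ)
        - (rhoQ op 0 + rhoQ ot 1 + rhoQ oo 2)).PosSemidef := by
  have h2 : (((Real.sqrt 2 : ℝ)) : ℂ) * ((Real.sqrt 2 : ℝ) : ℂ) = 2 := by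
    rw [← Complex.ofReal_mul, Real.mul_self_sqrt (by norm_num)]; norm_num
  have h3 : Real.sqrt 3 * Real.sqrt 3 = 3 := Real.mul_self_sqrt (by norm_num)
  have h3' : Real.sqrt 3 ≠ 0 := by positivity
  intro op ot oo
  fin_cases op <;> fin_cases ot <;> fin_cases oo <;>
    simp only [Fin.zero_eta, Fin.mk_one, Fin.isValue, id_eq]
  · rw [show (((3 * ((1/2) * (1 + (Real.sqrt 3)⁻¹)) : ℝ) : ℂ) • (1 : Matrix (Fin 2) (Fin 2) ℂ)
        - (rhoQ 0 0 + rhoQ 0 1 + rhoQ 0 2))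
      = !![((((Real.sqrt 3 - 1)/2 : ℝ)) : ℂ), ((-1 : ℂ) + Complex.I)/2;
           star (((-1 : ℂ) + Complex.I)/2 : ℂ), ((((Real.sqrt 3 + 1)/2 : ℝ)) : ℂ)] from by
      ext i j
      fin_cases i <;> fin_cases j <;>
        simp [rhoQ, Had, Km, Matrix.mul_apply, Fin.sum_univ_two, Matrix.single,
          Matrix.one_apply, Matrix.conjTranspose_apply, Matrix.vecMul, dotProduct,
          Matrix.vecHead, Matrix.vecTail, Complex.ext_iff, Complex.conj_ofReal] <;>
        field_simp <;>
        split_ands <;>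
        nlinarith [h3, Real.sqrt_nonneg 3, Real.sq_sqrt (by norm_num : (2:ℝ)≥0)]]
    exact psd2 _ _ _ (by nlinarith [h3, Real.sqrt_nonneg 3])
      (by simp [Complex.normSq_apply]; nlinarith [h3])
  · rw [show (((3 * ((1/2) * (1 + (Real.sqrt 3)⁻¹)) : ℝ) : ℂ) • (1 : Matrix (Fin 2) (Fin 2) ℂ)
        - (rhoQ 0 0 + rhoQ 0 1 + rhoQ 1 2))
      = !![((((Real.sqrt 3 - 1)/2 : ℝ)) : ℂ), ((-1 : ℂ) - Complex.I)/2;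
           star (((-1 : ℂ) - Complex.I)/2 : ℂ), ((((Real.sqrt 3 + 1)/2 : ℝ)) : ℂ)] from by
      ext i j
      fin_cases i <;> fin_cases j <;>
        simp [rhoQ, Had, Km, Matrix.mul_apply, Fin.sum_univ_two, Matrix.single,
          Matrix.one_apply, Matrix.conjTranspose_apply, Matrix.vecMul, dotProduct,
          Matrix.vecHead, Matrix.vecTail, Complex.ext_iff, Complex.conj_ofReal] <;>
        field_simp <;>
        split_ands <;>
        nlinarith [h3, Real.sqrt_nonneg 3, Real.sq_sqrt (by norm_num : (2:ℝ)≥0)]]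
    exact psd2 _ _ _ (by nlinarith [h3, Real.sqrt_nonneg 3])
      (by simp [Complex.normSq_apply]; nlinarith [h3])
  · rw [show (((3 * ((1/2) * (1 + (Real.sqrt 3)⁻¹)) : ℝ) : ℂ) • (1 : Matrix (Fin 2) (Fin 2) ℂ)
        - (rhoQ 0 0 + rhoQ 1 1 + rhoQ 0 2))
      = !![((((Real.sqrt 3 - 1)/2 : ℝ)) : ℂ), ((1 : ℂ) + Complex.I)/2;
           star (((1 : ℂ) + Complex.I)/2 : ℂ), ((((Real.sqrt 3 + 1)/2 : ℝ)) : ℂ)] from by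
      ext i j
      fin_cases i <;> fin_cases j <;>
        simp [rhoQ, Had, Km, Matrix.mul_apply, Fin.sum_univ_two, Matrix.single,
          Matrix.one_apply, Matrix.conjTranspose_apply, Matrix.vecMul, dotProduct,
          Matrix.vecHead, Matrix.vecTail, Complex.ext_iff, Complex.conj_ofReal] <;>
        field_simp <;>
        split_ands <;>
        nlinarith [h3, Real.sqrt_nonneg 3, Real.sq_sqrt (by norm_num : (2:ℝ)≥0)]]
    exact psd2 _ _ _ (by nlinarith [h3, Real.sqrt_nonneg 3])
      (by simp [Complex.normSq_apply]; nlinarith [h3])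
  · rw [show (((3 * ((1/2) * (1 + (Real.sqrt 3)⁻¹)) : ℝ) : ℂ) • (1 : Matrix (Fin 2) (Fin 2) ℂ)
        - (rhoQ 0 0 + rhoQ 1 1 + rhoQ 1 2))
      = !![((((Real.sqrt 3 - 1)/2 : ℝ)) : ℂ), ((1 : ℂ) - Complex.I)/2;
           star (((1 : ℂ) - Complex.I)/2 : ℂ), ((((Real.sqrt 3 + 1)/2 : ℝ)) : ℂ)] from by
      ext i j
      fin_cases i <;> fin_cases j <;>
        simp [rhoQ, Had, Km, Matrix.mul_apply, Fin.sum_univ_two, Matrix.single,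
          Matrix.one_apply, Matrix.conjTranspose_apply, Matrix.vecMul, dotProduct,
          Matrix.vecHead, Matrix.vecTail, Complex.ext_iff, Complex.conj_ofReal] <;>
        field_simp <;>
        split_ands <;>
        nlinarith [h3, Real.sqrt_nonneg 3, Real.sq_sqrt (by norm_num : (2:ℝ)≥0)]]
    exact psd2 _ _ _ (by nlinarith [h3, Real.sqrt_nonneg 3])
      (by simp [Complex.normSq_apply]; nlinarith [h3])
  · rw [show (((3 * ((1/2) * (1 + (Real.sqrt 3)⁻¹)) : ℝ) : ℂ) • (1 : Matrix (Fin 2) (Fin 2) ℂ)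
        - (rhoQ 1 0 + rhoQ 0 1 + rhoQ 0 2))
      = !![((((Real.sqrt 3 + 1)/2 : ℝ)) : ℂ), ((-1 : ℂ) + Complex.I)/2;
           star (((-1 : ℂ) + Complex.I)/2 : ℂ), ((((Real.sqrt 3 - 1)/2 : ℝ)) : ℂ)] from by
      ext i j
      fin_cases i <;> fin_cases j <;>
        simp [rhoQ, Had, Km, Matrix.mul_apply, Fin.sum_univ_two, Matrix.single,
          Matrix.one_apply, Matrix.conjTranspose_apply, Matrix.vecMul, dotProduct,
          Matrix.vecHead, Matrix.vecTail, Complex.ext_iff, Complex.conj_ofReal] <;>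
        field_simp <;>
        split_ands <;>
        nlinarith [h3, Real.sqrt_nonneg 3, Real.sq_sqrt (by norm_num : (2:ℝ)≥0)]]
    exact psd2 _ _ _ (by nlinarith [h3, Real.sqrt_nonneg 3])
      (by simp [Complex.normSq_apply]; nlinarith [h3])
  · rw [show (((3 * ((1/2) * (1 + (Real.sqrt 3)⁻¹)) : ℝ) : ℂ) • (1 : Matrix (Fin 2) (Fin 2) ℂ)
        - (rhoQ 1 0 + rhoQ 0 1 + rhoQ 1 2))
      = !![((((Real.sqrt 3 + 1)/2 : ℝ)) : ℂ), ((-1 : ℂ) - Complex.I)/2;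
           star (((-1 : ℂ) - Complex.I)/2 : ℂ), ((((Real.sqrt 3 - 1)/2 : ℝ)) : ℂ)] from by
      ext i j
      fin_cases i <;> fin_cases j <;>
        simp [rhoQ, Had, Km, Matrix.mul_apply, Fin.sum_univ_two, Matrix.single,
          Matrix.one_apply, Matrix.conjTranspose_apply, Matrix.vecMul, dotProduct,
          Matrix.vecHead, Matrix.vecTail, Complex.ext_iff, Complex.conj_ofReal] <;>
        field_simp <;>
        split_ands <;>
        nlinarith [h3, Real.sqrt_nonneg 3, Real.sq_sqrt (by norm_num : (2:ℝ)≥0)]]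
    exact psd2 _ _ _ (by nlinarith [h3, Real.sqrt_nonneg 3])
      (by simp [Complex.normSq_apply]; nlinarith [h3])
  · rw [show (((3 * ((1/2) * (1 + (Real.sqrt 3)⁻¹)) : ℝ) : ℂ) • (1 : Matrix (Fin 2) (Fin 2) ℂ)
        - (rhoQ 1 0 + rhoQ 1 1 + rhoQ 0 2))
      = !![((((Real.sqrt 3 + 1)/2 : ℝ)) : ℂ), ((1 : ℂ) + Complex.I)/2;
           star (((1 : ℂ) + Complex.I)/2 : ℂ), ((((Real.sqrt 3 - 1)/2 : ℝ)) : ℂ)] from by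
      ext i j
      fin_cases i <;> fin_cases j <;>
        simp [rhoQ, Had, Km, Matrix.mul_apply, Fin.sum_univ_two, Matrix.single,
          Matrix.one_apply, Matrix.conjTranspose_apply, Matrix.vecMul, dotProduct,
          Matrix.vecHead, Matrix.vecTail, Complex.ext_iff, Complex.conj_ofReal] <;>
        field_simp <;>
        split_ands <;>
        nlinarith [h3, Real.sqrt_nonneg 3, Real.sq_sqrt (by norm_num : (2:ℝ)≥0)]]
    exact psd2 _ _ _ (by nlinarith [h3, Real.sqrt_nonneg 3])
      (by simp [Complex.normSq_apply]; nlinarith [h3])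
  · rw [show (((3 * ((1/2) * (1 + (Real.sqrt 3)⁻¹)) : ℝ) : ℂ) • (1 : Matrix (Fin 2) (Fin 2) ℂ)
        - (rhoQ 1 0 + rhoQ 1 1 + rhoQ 1 2))
      = !![((((Real.sqrt 3 + 1)/2 : ℝ)) : ℂ), ((1 : ℂ) - Complex.I)/2;
           star (((1 : ℂ) - Complex.I)/2 : ℂ), ((((Real.sqrt 3 - 1)/2 : ℝ)) : ℂ)] from by
      ext i j
      fin_cases i <;> fin_cases j <;>
        simp [rhoQ, Had, Km, Matrix.mul_apply, Fin.sum_univ_two, Matrix.single,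
          Matrix.one_apply, Matrix.conjTranspose_apply, Matrix.vecMul, dotProduct,
          Matrix.vecHead, Matrix.vecTail, Complex.ext_iff, Complex.conj_ofReal] <;>
        field_simp <;>
        split_ands <;>
        nlinarith [h3, Real.sqrt_nonneg 3, Real.sq_sqrt (by norm_num : (2:ℝ)≥0)]]
    exact psd2 _ _ _ (by nlinarith [h3, Real.sqrt_nonneg 3])
      (by simp [Complex.normSq_apply]; nlinarith [h3])
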